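/- Suppose the per-period cost functions C_h are convex and differentiable, each feasible set L_n is nonempty, and α ∈ (0,1]. Then the daily-proportional game has exactly one Nash equilibrium, and a profile ℓ ∈ L is a Nash equilibrium if and only if ℓ is the unique minimizer over L of the potential W^DP_α(ℓ) = (1−α) Σ_h C_h(ℓ^h) + α Σ_n (E/E_n) ω_n Σ_h (ℓ_n^h − ℓ̂_n^h)². -/

import Mathlib

open Set Filter Topology

/-- Sum over an update of a dependent-ish family. -/
lemma dp_sum_update_g {ι : Type*} [Fintype ι] [DecidableEq ι] {β : Type*}
    (ℓ : ι → β) (n : ι) (x : β) (G : ι → β → ℝ) :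
    ∑ m, G m (Function.update ℓ n x m) = (∑ m, G m (ℓ m)) + (G n x - G n (ℓ n)) := by
  rw [← Finset.sum_erase_add _ _ (Finset.mem_univ n),
      ← Finset.sum_erase_add _ (fun m => G m (ℓ m)) (Finset.mem_univ n)]
  have hcongr : ∀ m ∈ Finset.univ.erase n,
      G m (Function.update ℓ n x m) = G m (ℓ m) := fun m hm => by
    rw [Function.update_of_ne (Finset.ne_of_mem_erase hm)]
  rw [Finset.sum_congr rfl hcongr, Function.update_self]
  ring

/-- Gradient inequality for convex differentiable functions on ℝ. -/
lemma dp_grad_ineq {C : ℝ → ℝ} (hconv : ConvexOn ℝ Set.univ C)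
    (hdiff : Differentiable ℝ C) (a b : ℝ) :
    C a + deriv C a * (b - a) ≤ C b := by
  rcases lt_trichotomy a b with h | rfl | h
  · have h1 := hconv.deriv_le_slope (mem_univ a) (mem_univ b) h (hdiff a)
    rw [slope_def_field] at h1
    rw [le_div_iff₀ (by linarith)] at h1
    linarith
  · simp
  · have h1 := hconv.slope_le_deriv (mem_univ b) (mem_univ a) h (hdiff a)
    rw [slope_def_field] at h1
    rw [div_le_iff₀ (by linarith)] at h1
    linarith

/-- If `g` has derivative `d` at `0` and `0` minimizes `g` on `(0,1]`, then `0 ≤ d`. -/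
lemma dp_deriv_nonneg_of_min {g : ℝ → ℝ} {d : ℝ}
    (hd : HasDerivAt g d 0) (hmin : ∀ t ∈ Set.Ioc (0:ℝ) 1, g 0 ≤ g t) : 0 ≤ d := by
  have h := hasDerivAt_iff_tendsto_slope.mp hd
  have h2 : Tendsto (slope g 0) (𝓝[>] 0) (𝓝 d) :=
    h.mono_left (nhdsWithin_mono 0 (fun t ht => ne_of_gt ht))
  refine ge_of_tendsto h2 ?_
  filter_upwards [Ioc_mem_nhdsGT_of_mem (by constructor <;> norm_num : (0:ℝ) ∈ Set.Ico 0 1)]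
    with t ht
  rw [slope_def_field, div_nonneg_iff]
  exact Or.inl ⟨by linarith [hmin t ht], by linarith [ht.1]⟩

theorem dp_unique_NE_potential_minimizer
    (N H : ℕ)
    (En : Fin N → ℝ) (hEn : ∀ n, 0 < En n)
    (ω : Fin N → ℝ) (hω : ∀ n, 0 < ω n)
    (lhat : Fin N → Fin H → ℝ)
    (lb ub : Fin N → Fin H → ℝ)
    (hlb : ∀ n h, 0 ≤ lb n h) (hbnds : ∀ n h, lb n h ≤ ub n h)
    (C : Fin H → ℝ → ℝ)
    (hCconv : ∀ h, ConvexOn ℝ Set.univ (C h))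
    (hCdiff : ∀ h, Differentiable ℝ (C h))
    (α : ℝ) (hα : α ∈ Set.Ioc (0 : ℝ) 1)
    (E : ℝ) (hE : E = ∑ n, En n)
    (Ln : Fin N → Set (Fin H → ℝ))
    (hLn : ∀ n, Ln n =
      {x | (∑ h, x h) = En n ∧ ∀ h, lb n h ≤ x h ∧ x h ≤ ub n h})
    (hLnNonempty : ∀ n, (Ln n).Nonempty)
    (L : Set (Fin N → Fin H → ℝ))
    (hL : L = {ℓ | ∀ n, ℓ n ∈ Ln n})
    (f : Fin N → (Fin N → Fin H → ℝ) → ℝ)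
    (hf : ∀ n ℓ, f n ℓ =
      (1 - α) * ((En n / E) * ∑ h, C h (∑ m, ℓ m h))
        + α * (ω n * ∑ h, (ℓ n h - lhat n h) ^ 2))
    (W : (Fin N → Fin H → ℝ) → ℝ)
    (hW : ∀ ℓ, W ℓ =
      (1 - α) * ∑ h, C h (∑ m, ℓ m h)
        + α * ∑ n, (E / En n) * ω n * ∑ h, (ℓ n h - lhat n h) ^ 2)
    (isNE : (Fin N → Fin H → ℝ) → Prop)
    (hNE : ∀ ℓ, isNE ℓ ↔ ℓ ∈ L ∧
      ∀ n, ∀ x ∈ Ln n, f n ℓ ≤ f n (Function.update ℓ n x)) :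
    (∃! ℓ, isNE ℓ) ∧
      (∀ ℓ ∈ L, (isNE ℓ ↔
        ((∀ x ∈ L, W ℓ ≤ W x) ∧ (∀ x ∈ L, W x = W ℓ → x = ℓ)))) := by
  obtain ⟨hα0, hα1⟩ := hα
  have hα1' : (0:ℝ) ≤ 1 - α := by linarith
  rcases Nat.eq_zero_or_pos N with hN | hN
  · -- degenerate case N = 0
    subst hN
    have hss : ∀ (a b : Fin 0 → Fin H → ℝ), a = b := fun a b => funext fun n => n.elim0
    have hLuniv : ∀ ℓ, ℓ ∈ L := by intro ℓ; rw [hL]; intro n; exact n.elim0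
    have hNE' : ∀ ℓ, isNE ℓ := fun ℓ => (hNE ℓ).mpr ⟨hLuniv ℓ, fun n => n.elim0⟩
    refine ⟨⟨fun _ _ => 0, hNE' _, fun y _ => hss y _⟩, ?_⟩
    intro ℓ _
    constructor
    · intro _
      exact ⟨fun x _ => by rw [hss x ℓ], fun x _ _ => hss x ℓ⟩
    · intro _; exact hNE' ℓ
  -- main case N > 0
  have hEpos : 0 < E := by
    rw [hE]; exact Finset.sum_pos (fun n _ => hEn n) ⟨⟨0, hN⟩, Finset.mem_univ _⟩
  have hEne : E ≠ 0 := ne_of_gt hEpos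
  have hc : ∀ n, 0 < E / En n * ω n := fun n => mul_pos (div_pos hEpos (hEn n)) (hω n)
  have hmemLn : ∀ n (x : Fin H → ℝ), x ∈ Ln n ↔
      (∑ h, x h) = En n ∧ ∀ h, lb n h ≤ x h ∧ x h ≤ ub n h := by
    intro n x; rw [hLn n]; rfl
  have hmemL : ∀ ℓ, ℓ ∈ L ↔ ∀ n, ℓ n ∈ Ln n := by intro ℓ; rw [hL]; rfl
  have hupdateL : ∀ ℓ ∈ L, ∀ n, ∀ x ∈ Ln n, Function.update ℓ n x ∈ L := by
    intro ℓ hℓ n x hx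
    rw [hmemL] at hℓ ⊢
    intro m
    by_cases hmn : m = n
    · subst hmn; rw [Function.update_self]; exact hx
    · rw [Function.update_of_ne hmn]; exact hℓ m
  have hsum_upd : ∀ (ℓ : Fin N → Fin H → ℝ) (n : Fin N) (x : Fin H → ℝ) (h : Fin H),
      ∑ m, Function.update ℓ n x m h = (∑ m, ℓ m h) + (x h - ℓ n h) :=
    fun ℓ n x h => dp_sum_update_g ℓ n x (fun _ y => y h)
  -- potential identity
  have hpot : ∀ (ℓ : Fin N → Fin H → ℝ) (n : Fin N) (x : Fin H → ℝ),
      f n (Function.update ℓ n x) - f n ℓ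
        = (En n / E) * (W (Function.update ℓ n x) - W ℓ) := by
    intro ℓ n x
    rw [hf, hf, hW, hW]
    have h2 : ∑ m, (E / En m) * ω m * ∑ h, (Function.update ℓ n x m h - lhat m h) ^ 2
        = (∑ m, (E / En m) * ω m * ∑ h, (ℓ m h - lhat m h) ^ 2)
          + ((E / En n) * ω n * ∑ h, (x h - lhat n h) ^ 2
             - (E / En n) * ω n * ∑ h, (ℓ n h - lhat n h) ^ 2) :=
      dp_sum_update_g ℓ n x (fun m y => (E / En m) * ω m * ∑ h, (y h - lhat m h) ^ 2)
    simp only [Function.update_self, hsum_upd, h2]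
    have hEn' : En n ≠ 0 := ne_of_gt (hEn n)
    field_simp
    ring
  -- NE characterization via W
  have hNEiff : ∀ ℓ, isNE ℓ ↔ ℓ ∈ L ∧
      ∀ n, ∀ x ∈ Ln n, W ℓ ≤ W (Function.update ℓ n x) := by
    intro ℓ
    rw [hNE]
    refine and_congr_right fun _ => ?_
    refine forall_congr' fun n => forall₂_congr fun x hx => ?_
    have hp := hpot ℓ n x
    have hq : 0 < En n / E := div_pos (hEn n) hEpos
    constructor
    · intro h; nlinarith
    · intro h; nlinarith
  -- segment membership
  have hseg : ∀ n, ∀ a ∈ Ln n, ∀ b ∈ Ln n, ∀ t ∈ Set.Icc (0:ℝ) 1,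
      (fun h => a h + t * (b h - a h)) ∈ Ln n := by
    intro n a ha b hb t ht
    rw [hmemLn] at ha hb ⊢
    obtain ⟨ha1, ha2⟩ := ha; obtain ⟨hb1, hb2⟩ := hb
    constructor
    · rw [Finset.sum_add_distrib, ← Finset.mul_sum, Finset.sum_sub_distrib, ha1, hb1]
      simp
    · intro h
      obtain ⟨ha2l, ha2r⟩ := ha2 h; obtain ⟨hb2l, hb2r⟩ := hb2 h
      constructor <;> nlinarith [ht.1, ht.2]
  -- gradient inequality for W
  have hgradW : ∀ (ℓ x : Fin N → Fin H → ℝ),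
      W ℓ + ∑ n, ((1 - α) * ∑ h, deriv (C h) (∑ m, ℓ m h) * (x n h - ℓ n h)
        + α * ((E / En n) * ω n * ∑ h, 2 * (ℓ n h - lhat n h) * (x n h - ℓ n h))) ≤ W x := by
    intro ℓ x
    rw [hW, hW]
    have hCsum : (∑ h, C h (∑ m, ℓ m h))
        + ∑ h, deriv (C h) (∑ m, ℓ m h) * ((∑ m, x m h) - (∑ m, ℓ m h))
        ≤ ∑ h, C h (∑ m, x m h) := by
      rw [← Finset.sum_add_distrib]
      exact Finset.sum_le_sum fun h _ => dp_grad_ineq (hCconv h) (hCdiff h) _ _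
    have hQsum : (∑ n, (E / En n) * ω n * ∑ h, (ℓ n h - lhat n h)^2)
        + ∑ n, (E / En n) * ω n * ∑ h, 2*(ℓ n h - lhat n h)*(x n h - ℓ n h)
        ≤ ∑ n, (E / En n) * ω n * ∑ h, (x n h - lhat n h)^2 := by
      rw [← Finset.sum_add_distrib]
      refine Finset.sum_le_sum fun n _ => ?_
      rw [← mul_add]
      refine mul_le_mul_of_nonneg_left ?_ (le_of_lt (hc n))
      rw [← Finset.sum_add_distrib]
      refine Finset.sum_le_sum fun h _ => ?_
      nlinarith [sq_nonneg (x n h - ℓ n h)]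
    have hid : ∑ n, ((1 - α) * ∑ h, deriv (C h) (∑ m, ℓ m h) * (x n h - ℓ n h)
          + α * ((E / En n) * ω n * ∑ h, 2 * (ℓ n h - lhat n h) * (x n h - ℓ n h)))
        = (1 - α) * (∑ h, deriv (C h) (∑ m, ℓ m h) * ((∑ m, x m h) - (∑ m, ℓ m h)))
          + α * ∑ n, (E / En n) * ω n * ∑ h, 2*(ℓ n h - lhat n h)*(x n h - ℓ n h) := by
      rw [Finset.sum_add_distrib, ← Finset.mul_sum, ← Finset.mul_sum]
      congr 1
      congr 1
      rw [Finset.sum_comm]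
      refine Finset.sum_congr rfl fun h _ => ?_
      rw [← Finset.mul_sum]
      congr 1
      rw [Finset.sum_sub_distrib]
    rw [hid]
    nlinarith [hCsum, hQsum, hα0, hα1']
  -- NE implies global minimality of W
  have hNEmin : ∀ ℓ, isNE ℓ → ℓ ∈ L ∧ ∀ x ∈ L, W ℓ ≤ W x := by
    intro ℓ hℓNE
    obtain ⟨hℓL, hbest⟩ := (hNE ℓ).mp hℓNE
    refine ⟨hℓL, fun x hx => ?_⟩
    have hDnn : ∀ n, 0 ≤ (1 - α) * ∑ h, deriv (C h) (∑ m, ℓ m h) * (x n h - ℓ n h)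
        + α * ((E / En n) * ω n * ∑ h, 2 * (ℓ n h - lhat n h) * (x n h - ℓ n h)) := by
      intro n
      have hg : HasDerivAt (fun t : ℝ =>
          (1 - α) * ((En n / E) * ∑ h, C h ((∑ m, ℓ m h) + t * (x n h - ℓ n h)))
            + α * (ω n * ∑ h, (ℓ n h + t * (x n h - ℓ n h) - lhat n h) ^ 2))
          ((1 - α) * ((En n / E) * ∑ h, deriv (C h) (∑ m, ℓ m h) * (x n h - ℓ n h))
            + α * (ω n * ∑ h, 2 * (ℓ n h - lhat n h) * (x n h - ℓ n h))) 0 := by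
        apply HasDerivAt.add
        · apply HasDerivAt.const_mul
          apply HasDerivAt.const_mul
          apply HasDerivAt.fun_sum
          intro h _
          have haff : HasDerivAt (fun t : ℝ => (∑ m, ℓ m h) + t * (x n h - ℓ n h))
              (x n h - ℓ n h) 0 := by
            simpa using ((hasDerivAt_id (0:ℝ)).mul_const (x n h - ℓ n h)).const_add (∑ m, ℓ m h)
          have h2 : HasDerivAt (C h) (deriv (C h) (∑ m, ℓ m h))
              ((fun t : ℝ => (∑ m, ℓ m h) + t * (x n h - ℓ n h)) 0) := by
            simpa using (hCdiff h (∑ m, ℓ m h)).hasDerivAt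
          exact h2.comp 0 haff
        · apply HasDerivAt.const_mul
          apply HasDerivAt.const_mul
          apply HasDerivAt.fun_sum
          intro h _
          have hb : HasDerivAt (fun t : ℝ => ℓ n h + t * (x n h - ℓ n h) - lhat n h)
              (x n h - ℓ n h) 0 := by
            simpa using (((hasDerivAt_id (0:ℝ)).mul_const (x n h - ℓ n h)).const_add
              (ℓ n h)).sub_const (lhat n h)
          have hp2 := hb.pow 2
          norm_num at hp2
          exact hp2
      have hmin : ∀ t ∈ Set.Ioc (0:ℝ) 1,
          (fun t : ℝ =>
          (1 - α) * ((En n / E) * ∑ h, C h ((∑ m, ℓ m h) + t * (x n h - ℓ n h)))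
            + α * (ω n * ∑ h, (ℓ n h + t * (x n h - ℓ n h) - lhat n h) ^ 2)) 0
          ≤ (fun t : ℝ =>
          (1 - α) * ((En n / E) * ∑ h, C h ((∑ m, ℓ m h) + t * (x n h - ℓ n h)))
            + α * (ω n * ∑ h, (ℓ n h + t * (x n h - ℓ n h) - lhat n h) ^ 2)) t := by
        intro t ht
        simp only
        have hy : (fun h => ℓ n h + t * (x n h - ℓ n h)) ∈ Ln n :=
          hseg n (ℓ n) ((hmemL ℓ).mp hℓL n) (x n) ((hmemL x).mp hx n) t ⟨le_of_lt ht.1, ht.2⟩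
        have hfle := hbest n _ hy
        rw [hf, hf] at hfle
        have e1 : ∀ h, (∑ m, Function.update ℓ n (fun h => ℓ n h + t * (x n h - ℓ n h)) m h)
            = (∑ m, ℓ m h) + t * (x n h - ℓ n h) := by
          intro h; rw [hsum_upd]; ring
        simp only [Function.update_self, e1] at hfle
        simpa using hfle
      have hd0 := dp_deriv_nonneg_of_min hg hmin
      have hkey : (1 - α) * ∑ h, deriv (C h) (∑ m, ℓ m h) * (x n h - ℓ n h)
          + α * ((E / En n) * ω n * ∑ h, 2 * (ℓ n h - lhat n h) * (x n h - ℓ n h))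
          = (E / En n) *
            ((1 - α) * ((En n / E) * ∑ h, deriv (C h) (∑ m, ℓ m h) * (x n h - ℓ n h))
              + α * (ω n * ∑ h, 2 * (ℓ n h - lhat n h) * (x n h - ℓ n h))) := by
        have hEn' : En n ≠ 0 := ne_of_gt (hEn n)
        field_simp
      rw [hkey]
      exact mul_nonneg (le_of_lt (div_pos hEpos (hEn n))) hd0
    have hgr := hgradW ℓ x
    have hsum : 0 ≤ ∑ n, ((1 - α) * ∑ h, deriv (C h) (∑ m, ℓ m h) * (x n h - ℓ n h)
        + α * ((E / En n) * ω n * ∑ h, 2 * (ℓ n h - lhat n h) * (x n h - ℓ n h))) :=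
      Finset.sum_nonneg fun n _ => hDnn n
    linarith
  -- strict midpoint inequality
  have hmid : ∀ a ∈ L, ∀ b ∈ L, a ≠ b →
      2 * W (fun n h => a n h + (1/2) * (b n h - a n h)) < W a + W b := by
    intro a ha b hb hab
    obtain ⟨n0, hn0⟩ : ∃ n0, a n0 ≠ b n0 := by
      by_contra hcon
      push_neg at hcon
      exact hab (funext hcon)
    obtain ⟨h0, hh0⟩ : ∃ h0, a n0 h0 ≠ b n0 h0 := by
      by_contra hcon
      push_neg at hcon
      exact hn0 (funext hcon)
    rw [hW, hW, hW]
    have hCpart : ∀ h : Fin H, 2 * C h (∑ m, (a m h + (1/2) * (b m h - a m h)))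
        ≤ C h (∑ m, a m h) + C h (∑ m, b m h) := by
      intro h
      have hs : (∑ m, (a m h + (1/2) * (b m h - a m h)))
          = (1/2 : ℝ) * (∑ m, a m h) + (1/2 : ℝ) * (∑ m, b m h) := by
        rw [Finset.sum_add_distrib, ← Finset.mul_sum, Finset.sum_sub_distrib]
        ring
      have hcv := (hCconv h).2 (Set.mem_univ (∑ m, a m h)) (Set.mem_univ (∑ m, b m h))
        (by norm_num : (0:ℝ) ≤ 1/2) (by norm_num : (0:ℝ) ≤ 1/2) (by norm_num)
      rw [hs]
      simp only [smul_eq_mul] at hcv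
      linarith
  -- sum of C parts
    have hS1 : 2 * (∑ h, C h (∑ m, (a m h + (1/2) * (b m h - a m h))))
        ≤ (∑ h, C h (∑ m, a m h)) + ∑ h, C h (∑ m, b m h) := by
      rw [Finset.mul_sum, ← Finset.sum_add_distrib]
      exact Finset.sum_le_sum fun h _ => hCpart h
    have hQmid : ∀ n, (∑ h, (a n h + (1/2) * (b n h - a n h) - lhat n h) ^ 2)
        = (∑ h, (a n h - lhat n h) ^ 2) / 2 + (∑ h, (b n h - lhat n h) ^ 2) / 2
          - (∑ h, (b n h - a n h) ^ 2) / 4 := by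
      intro n
      rw [Finset.sum_div, Finset.sum_div, Finset.sum_div, ← Finset.sum_add_distrib,
        ← Finset.sum_sub_distrib]
      refine Finset.sum_congr rfl fun h _ => ?_
      ring
    have hQmid' : (∑ n, (E / En n) * ω n * ∑ h, (a n h + (1/2) * (b n h - a n h) - lhat n h) ^ 2)
        = (∑ n, (E / En n) * ω n * ∑ h, (a n h - lhat n h) ^ 2) / 2
          + (∑ n, (E / En n) * ω n * ∑ h, (b n h - lhat n h) ^ 2) / 2
          - (∑ n, (E / En n) * ω n * ∑ h, (b n h - a n h) ^ 2) / 4 := by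
      rw [Finset.sum_div, Finset.sum_div, Finset.sum_div, ← Finset.sum_add_distrib,
        ← Finset.sum_sub_distrib]
      refine Finset.sum_congr rfl fun n _ => ?_
      rw [hQmid n]
      ring
    have hdpos : 0 < (E / En n0) * ω n0 * ∑ h, (b n0 h - a n0 h) ^ 2 := by
      refine mul_pos (hc n0) (Finset.sum_pos' (fun h _ => sq_nonneg _) ⟨h0, Finset.mem_univ _, ?_⟩)
      exact lt_of_le_of_ne (sq_nonneg _)
        (Ne.symm (pow_ne_zero 2 (sub_ne_zero.mpr (Ne.symm hh0))))
    have hdge : (E / En n0) * ω n0 * ∑ h, (b n0 h - a n0 h) ^ 2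
        ≤ ∑ n, (E / En n) * ω n * ∑ h, (b n h - a n h) ^ 2 := by
      exact Finset.single_le_sum
        (f := fun n => (E / En n) * ω n * ∑ h, (b n h - a n h) ^ 2)
        (fun n _ => mul_nonneg (le_of_lt (hc n)) (Finset.sum_nonneg fun h _ => sq_nonneg _))
        (Finset.mem_univ n0)
    rw [hQmid']
    nlinarith [hS1, hα1', hα0, hdpos, hdge]
  -- uniqueness of minimizers
  have huniq : ∀ a ∈ L, ∀ b ∈ L, (∀ x ∈ L, W a ≤ W x) → (∀ x ∈ L, W b ≤ W x) → a = b := by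
    intro a ha b hb hmina hminb
    by_contra hab
    have hmL : (fun n h => a n h + (1/2 : ℝ) * (b n h - a n h)) ∈ L := by
      rw [hmemL]
      intro n
      exact hseg n (a n) ((hmemL a).mp ha n) (b n) ((hmemL b).mp hb n) (1/2) (by norm_num)
    have h1 := hmina _ hmL
    have h2 := hminb _ hmL
    have h3 := hmid a ha b hb hab
    linarith
  -- existence of a minimizer: compactness
  have hLncomp : ∀ n, IsCompact (Ln n) := by
    intro n
    have hsub : Ln n ⊆ Set.pi Set.univ (fun h => Set.Icc (lb n h) (ub n h)) := by
      intro x hx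
      rw [hmemLn] at hx
      intro h _
      exact ⟨(hx.2 h).1, (hx.2 h).2⟩
    have hcl : IsClosed (Ln n) := by
      rw [hLn]
      have heq : {x : Fin H → ℝ | (∑ h, x h) = En n ∧ ∀ h, lb n h ≤ x h ∧ x h ≤ ub n h}
          = {x : Fin H → ℝ | (∑ h, x h) = En n}
            ∩ Set.pi Set.univ (fun h => Set.Icc (lb n h) (ub n h)) := by
        ext x
        simp [Set.mem_pi, Set.mem_Icc, Pi.le_def, forall_and]
      rw [heq]
      refine IsClosed.inter ?_ (isClosed_set_pi fun h _ => isClosed_Icc)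
      exact isClosed_eq (continuous_finset_sum _ fun h _ => continuous_apply h) continuous_const
    exact IsCompact.of_isClosed_subset (isCompact_univ_pi fun h => isCompact_Icc) hcl hsub
  have hLcomp : IsCompact L := by
    have hLeq : L = Set.pi Set.univ Ln := by
      rw [hL]; ext ℓ; simp [Set.mem_pi]
    rw [hLeq]
    exact isCompact_univ_pi hLncomp
  have hLne : L.Nonempty :=
    ⟨fun n => (hLnNonempty n).choose, by
      rw [hmemL]; intro n; exact (hLnNonempty n).choose_spec⟩
  have hWcont : Continuous W := by
    have hW' : W = fun ℓ => (1 - α) * ∑ h, C h (∑ m, ℓ m h)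
        + α * ∑ n, (E / En n) * ω n * ∑ h, (ℓ n h - lhat n h) ^ 2 := funext hW
    rw [hW']
    refine Continuous.add (Continuous.mul continuous_const ?_) (Continuous.mul continuous_const ?_)
    · exact continuous_finset_sum _ fun h _ => (hCdiff h).continuous.comp
        (continuous_finset_sum _ fun m _ => (continuous_apply h).comp (continuous_apply m))
    · exact continuous_finset_sum _ fun n _ => Continuous.mul continuous_const
        (continuous_finset_sum _ fun h _ =>
          by fun_prop)
  obtain ⟨ℓs, hℓsL, hmins⟩ := hLcomp.exists_isMinOn hLne hWcont.continuousOn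
  rw [isMinOn_iff] at hmins
  -- minimizer is NE
  have hminNE : ∀ ℓ ∈ L, (∀ x ∈ L, W ℓ ≤ W x) → isNE ℓ := by
    intro ℓ hℓ hmin
    rw [hNEiff]
    exact ⟨hℓ, fun n x hx => hmin _ (hupdateL ℓ hℓ n x hx)⟩
  constructor
  · refine ⟨ℓs, hminNE ℓs hℓsL hmins, fun y hy => ?_⟩
    obtain ⟨hyL, hymin⟩ := hNEmin y hy
    exact huniq y hyL ℓs hℓsL hymin hmins
  · intro ℓ hℓ
    constructor
    · intro hNEℓ
      obtain ⟨_, hm⟩ := hNEmin ℓ hNEℓ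
      refine ⟨hm, fun x hx hWx => ?_⟩
      refine huniq x hx ℓ hℓ (fun y hy => ?_) hm
      rw [hWx]; exact hm y hy
    · rintro ⟨hm, _⟩
      exact hminNE ℓ hℓ hm
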